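/- Let Y be a standard Gaussian random variable on ℝ. For every real α ≥ 1 and every x > 0 satisfying x² ≥ 2(α − 1), one has E[|Y|^α · 1{|Y| ≥ x}] ≤ 4 x^{α−1} e^{−x²/2}. -/

import Mathlib

open MeasureTheory ProbabilityTheory

open Real Filter Set
open scoped ENNReal NNReal

lemma gtm_intIoi (x : ℝ) :
    ∫ y in Set.Ioi x, y * Real.exp (-y ^ 2 / 4) = 2 * Real.exp (-x ^ 2 / 4) := by
  have hInt : MeasureTheory.Integrable (fun y : ℝ => y * Real.exp (-y ^ 2 / 4)) := by
    have h0 := integrable_rpow_mul_exp_neg_mul_sq (by norm_num : (0:ℝ) < 1/4)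
      (by norm_num : (-1:ℝ) < 1)
    refine h0.congr (Filter.Eventually.of_forall fun y => ?_)
    simp only [Real.rpow_one]
    congr 1
    ring
  have hderiv : ∀ y ∈ Set.Ici x,
      HasDerivAt (fun y : ℝ => -2 * Real.exp (-y ^ 2 / 4)) (y * Real.exp (-y ^ 2 / 4)) y := by
    intro y _
    have h1 : HasDerivAt (fun y : ℝ => -y ^ 2 / 4) (-(2 * y) / 4) y := by
      have := ((hasDerivAt_pow 2 y).neg).div_const 4
      simpa using this
    have h2 := (h1.exp).const_mul (-2 : ℝ)
    refine h2.congr_deriv ?_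
    ring
  have htend : Filter.Tendsto (fun y : ℝ => -2 * Real.exp (-y ^ 2 / 4)) Filter.atTop (nhds 0) := by
    have h1 : Filter.Tendsto (fun y : ℝ => -y ^ 2 / 4) Filter.atTop Filter.atBot := by
      apply Filter.Tendsto.atBot_div_const (by norm_num)
      exact Filter.tendsto_neg_atBot_iff.mpr (tendsto_pow_atTop (by norm_num))
    have := (Real.tendsto_exp_atBot.comp h1).const_mul (-2 : ℝ)
    simpa using this
  have := integral_Ioi_of_hasDerivAt_of_tendsto' hderiv (hInt.integrableOn) htend
  rw [this]
  ring

lemma gtm_key (α x t : ℝ) (hα : 1 ≤ α) (hx : 0 < x) (hx2 : 2 * (α - 1) ≤ x ^ 2)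
    (hxt : x ≤ t) :
    t ^ (α - 1) * Real.exp (-t ^ 2 / 4) ≤ x ^ (α - 1) * Real.exp (-x ^ 2 / 4) := by
  have ht0 : 0 < t := lt_of_lt_of_le hx hxt
  rw [Real.rpow_def_of_pos ht0, Real.rpow_def_of_pos hx, ← Real.exp_add, ← Real.exp_add]
  rw [Real.exp_le_exp]
  set L := Real.log t - Real.log x with hL
  have h2 : 0 ≤ L := sub_nonneg.mpr (Real.log_le_log hx hxt)
  have h1 : L ≤ t / x - 1 := by
    rw [hL, ← Real.log_div (ne_of_gt ht0) (ne_of_gt hx)]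
    exact Real.log_le_sub_one_of_pos (div_pos ht0 hx)
  have h1' : x * L ≤ t - x := by
    have := mul_le_mul_of_nonneg_left h1 hx.le
    have hx' : x ≠ 0 := ne_of_gt hx
    calc x * L ≤ x * (t / x - 1) := this
      _ = t - x := by field_simp
  have hA : (α - 1) * L ≤ (x ^ 2 / 2) * L :=
    mul_le_mul_of_nonneg_right (by linarith) h2
  have hB : (x ^ 2 / 2) * L ≤ (x / 2) * (t - x) := by
    have := mul_le_mul_of_nonneg_left h1' (by positivity : (0:ℝ) ≤ x / 2)
    calc (x ^ 2 / 2) * L = (x / 2) * (x * L) := by ring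
      _ ≤ (x / 2) * (t - x) := this
  have hC : (x / 2) * (t - x) ≤ (t ^ 2 - x ^ 2) / 4 := by nlinarith [sq_nonneg (t - x)]
  nlinarith [hA, hB, hC]

/-- Let `Y` be a standard Gaussian. For every real `α ≥ 1` and every `x > 0` with
`x² ≥ 2(α-1)`, one has `E[|Y|^α · 1{|Y| ≥ x}] ≤ 4 x^(α-1) e^(-x²/2)`. -/
theorem gaussian_tail_moment (α x : ℝ) (hα : 1 ≤ α) (hx : 0 < x)
    (hx2 : 2 * (α - 1) ≤ x ^ 2) :
    ∫ y in {y : ℝ | x ≤ |y|}, |y| ^ α ∂(gaussianReal 0 1)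
      ≤ 4 * x ^ (α - 1) * Real.exp (-x ^ 2 / 2) := by
  have hS : MeasurableSet {y : ℝ | x ≤ |y|} :=
    measurableSet_le measurable_const measurable_id.abs
  -- rewrite as a Lebesgue integral against the density
  have hrw : ∫ y in {y : ℝ | x ≤ |y|}, |y| ^ α ∂(gaussianReal 0 1)
      = ∫ y in {y : ℝ | x ≤ |y|}, gaussianPDFReal 0 1 y * |y| ^ α := by
    rw [gaussianReal_of_var_ne_zero 0 one_ne_zero]
    have : (gaussianPDF 0 1) = fun y => ((gaussianPDFReal 0 1 y).toNNReal : ℝ≥0∞) := rfl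
    rw [this, setIntegral_withDensity_eq_setIntegral_smul
      ((measurable_gaussianPDFReal 0 1).real_toNNReal) _ hS]
    refine setIntegral_congr_fun hS fun y _ => ?_
    rw [NNReal.smul_def, Real.coe_toNNReal _ (gaussianPDFReal_nonneg 0 1 y), smul_eq_mul]
  rw [hrw]
  -- the comparison function
  set C : ℝ := x ^ (α - 1) * Real.exp (-x ^ 2 / 4) with hC
  have hInt : MeasureTheory.Integrable (fun y : ℝ => y * Real.exp (-y ^ 2 / 4)) := by
    have h0 := integrable_rpow_mul_exp_neg_mul_sq (by norm_num : (0:ℝ) < 1/4)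
      (by norm_num : (-1:ℝ) < 1)
    refine h0.congr (Filter.Eventually.of_forall fun y => ?_)
    simp only [Real.rpow_one]
    congr 1
    ring
  have hIntAbs : MeasureTheory.Integrable (fun y : ℝ => |y| * Real.exp (-y ^ 2 / 4)) := by
    have := hInt.abs
    refine this.congr (Filter.Eventually.of_forall fun y => ?_)
    simp [abs_mul, Real.abs_exp]
  -- pointwise bound on the set
  have hpt : ∀ y ∈ {y : ℝ | x ≤ |y|},
      gaussianPDFReal 0 1 y * |y| ^ α ≤ C * (|y| * Real.exp (-y ^ 2 / 4)) := by
    intro y hy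
    have hxy : x ≤ |y| := hy
    have hy0 : 0 < |y| := lt_of_lt_of_le hx hxy
    have hpdf : gaussianPDFReal 0 1 y ≤ Real.exp (-y ^ 2 / 2) := by
      rw [gaussianPDFReal]
      simp only [NNReal.coe_one, mul_one, sub_zero]
      have h1 : Real.sqrt (2 * Real.pi) ≥ 1 := by
        rw [show (1:ℝ) = Real.sqrt 1 by simp]
        exact Real.sqrt_le_sqrt (by nlinarith [Real.pi_gt_three])
      calc (Real.sqrt (2 * Real.pi))⁻¹ * Real.exp (-y ^ 2 / 2)
          ≤ 1 * Real.exp (-y ^ 2 / 2) := by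
            apply mul_le_mul_of_nonneg_right _ (Real.exp_pos _).le
            exact inv_le_one_of_one_le₀ h1
        _ = Real.exp (-y ^ 2 / 2) := one_mul _
    have hsplit : |y| ^ α = |y| ^ (α - 1) * |y| := by
      rw [show α = (α - 1) + 1 by ring, Real.rpow_add hy0, Real.rpow_one]
      ring_nf
    have hexp : Real.exp (-y ^ 2 / 2) = Real.exp (-y ^ 2 / 4) * Real.exp (-y ^ 2 / 4) := by
      rw [← Real.exp_add]; congr 1; ring
    have hkey := gtm_key α x |y| hα hx hx2 hxy
    have habs : (-|y| ^ 2 : ℝ) = -y ^ 2 := by rw [sq_abs]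
    calc gaussianPDFReal 0 1 y * |y| ^ α
        ≤ Real.exp (-y ^ 2 / 2) * |y| ^ α := by
          apply mul_le_mul_of_nonneg_right hpdf (Real.rpow_nonneg (abs_nonneg y) α)
      _ = (|y| ^ (α - 1) * Real.exp (-y ^ 2 / 4)) * (|y| * Real.exp (-y ^ 2 / 4)) := by
          rw [hsplit, hexp]; ring
      _ ≤ C * (|y| * Real.exp (-y ^ 2 / 4)) := by
          apply mul_le_mul_of_nonneg_right _ (by positivity)
          rw [hC]
          calc |y| ^ (α - 1) * Real.exp (-y ^ 2 / 4)
              = |y| ^ (α - 1) * Real.exp (-|y| ^ 2 / 4) := by rw [habs]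
            _ ≤ x ^ (α - 1) * Real.exp (-x ^ 2 / 4) := hkey
  -- integral comparison
  have hmono : ∫ y in {y : ℝ | x ≤ |y|}, gaussianPDFReal 0 1 y * |y| ^ α
      ≤ ∫ y in {y : ℝ | x ≤ |y|}, C * (|y| * Real.exp (-y ^ 2 / 4)) := by
    apply integral_mono_of_nonneg
    · exact Filter.Eventually.of_forall fun y =>
        mul_nonneg (gaussianPDFReal_nonneg 0 1 y) (Real.rpow_nonneg (abs_nonneg y) α)
    · exact ((hIntAbs.const_mul C).restrict)
    · filter_upwards [MeasureTheory.ae_restrict_mem hS] with y hy using hpt y hy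
  -- compute the comparison integral
  have hset : {y : ℝ | x ≤ |y|} = Set.Iic (-x) ∪ Set.Ici x := by
    ext y
    simp only [Set.mem_setOf_eq, Set.mem_union, Set.mem_Iic, Set.mem_Ici, le_abs, le_neg]
    tauto
  have hIci : ∫ y in Set.Ici x, |y| * Real.exp (-y ^ 2 / 4) = 2 * Real.exp (-x ^ 2 / 4) := by
    rw [MeasureTheory.integral_Ici_eq_integral_Ioi]
    rw [setIntegral_congr_fun measurableSet_Ioi
      (fun y hy => by rw [abs_of_pos (lt_trans hx hy)])]
    exact gtm_intIoi x
  have hIic : ∫ y in Set.Iic (-x), |y| * Real.exp (-y ^ 2 / 4)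
      = 2 * Real.exp (-x ^ 2 / 4) := by
    have h := integral_comp_neg_Iic (-x) (fun y => |y| * Real.exp (-y ^ 2 / 4))
    rw [neg_neg] at h
    rw [← hIci, MeasureTheory.integral_Ici_eq_integral_Ioi, ← h]
    refine setIntegral_congr_fun measurableSet_Iic fun y _ => ?_
    simp [neg_sq]
  have hcomp : ∫ y in {y : ℝ | x ≤ |y|}, |y| * Real.exp (-y ^ 2 / 4)
      = 4 * Real.exp (-x ^ 2 / 4) := by
    rw [hset, setIntegral_union _ measurableSet_Ici hIntAbs.integrableOn hIntAbs.integrableOn,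
      hIic, hIci]
    · ring
    · rw [Set.disjoint_left]
      intro y hy1 hy2
      simp only [Set.mem_Iic, Set.mem_Ici] at hy1 hy2
      linarith
  calc ∫ y in {y : ℝ | x ≤ |y|}, gaussianPDFReal 0 1 y * |y| ^ α
      ≤ ∫ y in {y : ℝ | x ≤ |y|}, C * (|y| * Real.exp (-y ^ 2 / 4)) := hmono
    _ = C * (4 * Real.exp (-x ^ 2 / 4)) := by rw [MeasureTheory.integral_const_mul, hcomp]
    _ = 4 * x ^ (α - 1) * (Real.exp (-x ^ 2 / 4) * Real.exp (-x ^ 2 / 4)) := by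
        rw [hC]; ring
    _ = 4 * x ^ (α - 1) * Real.exp (-x ^ 2 / 2) := by
        rw [← Real.exp_add]; congr 1; ring
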